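/- Let f(z) = 3.3957·(1−z)·exp(∫ᶻ¹ F(w) dw) where F(z) = −(z⁴ + 6z² + 4z + 1)/((z+1)(z²+1)²). Then f is strictly decreasing on the interval [z₀, 1], where z₀ = √(−2 + √5). -/

import Mathlib

noncomputable def F (z : ℝ) : ℝ :=
  -(z ^ 4 + 6 * z ^ 2 + 4 * z + 1) / ((z + 1) * (z ^ 2 + 1) ^ 2)

noncomputable def f (z : ℝ) : ℝ := 3.3957 * (1 - z) * Real.exp (∫ w in z..1, F w)

lemma F_contOn : ContinuousOn F (Set.Ioi (0 : ℝ)) := by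
  apply ContinuousOn.div
  · fun_prop
  · fun_prop
  · intro x hx
    simp only [Set.mem_Ioi] at hx
    positivity

lemma F_intble {a : ℝ} (ha : 0 < a) : IntervalIntegrable F MeasureTheory.volume a 1 := by
  apply ContinuousOn.intervalIntegrable
  apply F_contOn.mono
  intro x hx
  rcases hx with ⟨h1, _⟩
  simp only [Set.mem_Ioi]
  have : min a 1 > 0 := lt_min ha one_pos
  linarith [le_of_lt this, h1]

lemma hasDerivAt_g {a : ℝ} (ha : 0 < a) :
    HasDerivAt (fun z => ∫ w in z..1, F w) (-F a) a := by
  apply intervalIntegral.integral_hasDerivAt_left (F_intble ha)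
  · exact F_contOn.stronglyMeasurableAtFilter isOpen_Ioi a (Set.mem_Ioi.mpr ha)
  · exact F_contOn.continuousAt (isOpen_Ioi.mem_nhds ha)

lemma hasDerivAt_f {a : ℝ} (ha : 0 < a) :
    HasDerivAt f (3.3957 * ((-1) * Real.exp (∫ w in a..1, F w) +
      (1 - a) * (Real.exp (∫ w in a..1, F w) * (-F a)))) a := by
  have h1 : HasDerivAt (fun z : ℝ => 1 - z) (-1) a := by
    simpa using (hasDerivAt_id a).const_sub 1
  have hg := hasDerivAt_g ha
  have hexp := hg.exp
  have h2 := (h1.mul hexp).const_mul (3.3957 : ℝ)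
  have heq : f = fun y => 3.3957 * ((1 - y) * Real.exp (∫ w in y..1, F w)) := by
    funext y
    show 3.3957 * (1 - y) * Real.exp (∫ w in y..1, F w) = _
    ring
  rw [heq]
  exact h2

theorem stmt_5 : StrictAntiOn f (Set.Icc (Real.sqrt (-2 + Real.sqrt 5)) 1) := by
  have hs5 : Real.sqrt 5 ^ 2 = 5 := Real.sq_sqrt (by norm_num)
  have hs5pos : 2 < Real.sqrt 5 := by nlinarith [Real.sqrt_nonneg 5]
  have hz0pos : 0 < Real.sqrt (-2 + Real.sqrt 5) := Real.sqrt_pos.mpr (by linarith)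
  have hz0lt : Real.sqrt (-2 + Real.sqrt 5) < 1 := by
    rw [show (1:ℝ) = Real.sqrt 1 by simp]
    apply Real.sqrt_lt_sqrt (by linarith)
    nlinarith
  apply strictAntiOn_of_deriv_neg (convex_Icc _ _)
  · apply ContinuousOn.mul
    · fun_prop
    · apply Real.continuous_exp.comp_continuousOn
      intro a ha
      have ha0 : 0 < a := lt_of_lt_of_le hz0pos ha.1
      exact ((hasDerivAt_g ha0).continuousAt).continuousWithinAt
  · intro a ha
    rw [interior_Icc] at ha
    obtain ⟨ha1, ha2⟩ := ha
    have ha0 : 0 < a := lt_trans hz0pos ha1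
    rw [(hasDerivAt_f ha0).deriv]
    have hE : 0 < Real.exp (∫ w in a..1, F w) := Real.exp_pos _
    have hsq : -2 + Real.sqrt 5 < a ^ 2 := (Real.sqrt_lt' ha0).mp ha1
    have hD : 0 < (a + 1) * (a ^ 2 + 1) ^ 2 := by positivity
    have hkey : (1 - a) * (-F a) < 1 := by
      have hFa : -F a = (a ^ 4 + 6 * a ^ 2 + 4 * a + 1) / ((a + 1) * (a ^ 2 + 1) ^ 2) := by
        simp [F]; ring
      rw [hFa, ← mul_div_assoc, div_lt_one hD]
      nlinarith [hsq, ha0, mul_pos ha0 (show (0:ℝ) < a^4 + 4*a^2 - 1 by nlinarith)]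
    nlinarith [mul_pos hE (show (0:ℝ) < 1 - (1-a) * (-F a) by linarith)]
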